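/- For normal, convex f, g : [0,1] → [0,1], f ⋆ g ⊑ f and f ⋆ g ⊑ g in the partial order ⊑, where h ⊑ k means h ⊓ k = h; in particular, if neither f nor g equals 1_{1}, then f ⋆ g ≠ 1_{1}. -/
import Mathlib

open Set Classical

noncomputable section

/-- Left envelope: `f^L(x) = sup {f y : 0 ≤ y ≤ x}`. -/
def fL (f : ℝ → ℝ) (x : ℝ) : ℝ := sSup (f '' Set.Icc 0 x)

/-- Weak left envelope: `f^{Lw}(x) = sup {f y : 0 ≤ y < x}` (for `x ∈ (0,1]`). -/
def fLw (f : ℝ → ℝ) (x : ℝ) : ℝ := sSup (f '' Set.Ico 0 x)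

/-- Right envelope: `f^R(x) = sup {f y : x ≤ y ≤ 1}`. -/
def fR (f : ℝ → ℝ) (x : ℝ) : ℝ := sSup (f '' Set.Icc x 1)

/-- `f` maps `[0,1]` into `[0,1]`. -/
def MapsI (f : ℝ → ℝ) : Prop := ∀ x ∈ Set.Icc (0:ℝ) 1, f x ∈ Set.Icc (0:ℝ) 1

/-- `f` is normal: `sup f = 1` on `[0,1]`. -/
def NormalFn (f : ℝ → ℝ) : Prop := sSup (f '' Set.Icc 0 1) = 1

/-- `f` is convex: `f y ≥ min (f x) (f z)` whenever `0 ≤ x ≤ y ≤ z ≤ 1`. -/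
def ConvexFn (f : ℝ → ℝ) : Prop :=
  ∀ x y z : ℝ, 0 ≤ x → x ≤ y → y ≤ z → z ≤ 1 → min (f x) (f z) ≤ f y

/-- Convolution intersection: `(f ⊓ g)(x) = sup {min (f y) (g z) : min y z = x}`. -/
def inter (f g : ℝ → ℝ) (x : ℝ) : ℝ :=
  sSup {v | ∃ y ∈ Set.Icc (0:ℝ) 1, ∃ z ∈ Set.Icc (0:ℝ) 1, min y z = x ∧ v = min (f y) (g z)}

/-- Convolution union: `(f ⊔ g)(x) = sup {min (f y) (g z) : max y z = x}`. -/
def union (f g : ℝ → ℝ) (x : ℝ) : ℝ :=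
  sSup {v | ∃ y ∈ Set.Icc (0:ℝ) 1, ∃ z ∈ Set.Icc (0:ℝ) 1, max y z = x ∧ v = min (f y) (g z)}

/-- `L₁(f) = inf {x ∈ [0,1] : f^L(x) = 1}`. -/
def L1 (f : ℝ → ℝ) : ℝ := sInf {x ∈ Set.Icc (0:ℝ) 1 | fL f x = 1}

/-- `R¹(f) = sup {x ∈ [0,1] : f^R(x) = 1}`. -/
def R1 (f : ℝ → ℝ) : ℝ := sSup {x ∈ Set.Icc (0:ℝ) 1 | fR f x = 1}

/-- The characteristic function `1_{{1}}`. -/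
def ind1 : ℝ → ℝ := fun x => if x = 1 then 1 else 0

/-- The modified intersection `f ⋆ g`. -/
def star (f g : ℝ → ℝ) : ℝ → ℝ :=
  if Set.EqOn f ind1 (Set.Icc (0:ℝ) 1) then g
  else if Set.EqOn g ind1 (Set.Icc (0:ℝ) 1) then f
  else if min (f 1) (g 1) = 1 then inter f g
  else fun x => if x = 1 then 0 else inter f g x

section Aux

lemma interSet_bddAbove {f g : ℝ → ℝ} (hf : MapsI f) (x : ℝ) :
    BddAbove {v | ∃ y ∈ Set.Icc (0:ℝ) 1, ∃ z ∈ Set.Icc (0:ℝ) 1, min y z = x ∧ v = min (f y) (g z)} := by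
  refine ⟨1, ?_⟩
  rintro v ⟨y, hy, z, hz, hm, rfl⟩
  exact le_trans (min_le_left _ _) (hf y hy).2

lemma interSet_nonempty {f g : ℝ → ℝ} {x : ℝ} (hx : x ∈ Set.Icc (0:ℝ) 1) :
    Set.Nonempty {v | ∃ y ∈ Set.Icc (0:ℝ) 1, ∃ z ∈ Set.Icc (0:ℝ) 1, min y z = x ∧ v = min (f y) (g z)} :=
  ⟨min (f x) (g x), x, hx, x, hx, min_self x, rfl⟩

lemma inter_le {f g : ℝ → ℝ} {x c : ℝ} (hx : x ∈ Set.Icc (0:ℝ) 1)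
    (h : ∀ y ∈ Set.Icc (0:ℝ) 1, ∀ z ∈ Set.Icc (0:ℝ) 1, min y z = x → min (f y) (g z) ≤ c) :
    inter f g x ≤ c := by
  unfold inter
  apply csSup_le (interSet_nonempty hx)
  rintro v ⟨y, hy, z, hz, hm, rfl⟩
  exact h y hy z hz hm

lemma le_inter {f g : ℝ → ℝ} (hf : MapsI f) {x y z : ℝ} (hy : y ∈ Set.Icc (0:ℝ) 1)
    (hz : z ∈ Set.Icc (0:ℝ) 1) (hm : min y z = x) :
    min (f y) (g z) ≤ inter f g x :=
  le_csSup (interSet_bddAbove hf x) ⟨y, hy, z, hz, hm, rfl⟩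

lemma inter_nonneg {f g : ℝ → ℝ} (hf : MapsI f) (hg : MapsI g) {x : ℝ}
    (hx : x ∈ Set.Icc (0:ℝ) 1) : 0 ≤ inter f g x :=
  le_trans (le_min (hf x hx).1 (hg x hx).1) (le_inter hf hx hx (min_self x))

lemma le_fR {f : ℝ → ℝ} (hf : MapsI f) {x z : ℝ} (hx : x ∈ Set.Icc (0:ℝ) 1)
    (hz : z ∈ Set.Icc x 1) : f z ≤ fR f x := by
  have hb : BddAbove (f '' Set.Icc x 1) := by
    refine ⟨1, ?_⟩
    rintro v ⟨w, hw, rfl⟩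
    exact (hf w ⟨le_trans hx.1 hw.1, hw.2⟩).2
  show f z ≤ sSup (f '' Set.Icc x 1)
  exact le_csSup hb ⟨z, hz, rfl⟩

lemma min_csSup_le {S : Set ℝ} {a c : ℝ} (hne : S.Nonempty) (hbdd : BddAbove S)
    (h : ∀ s ∈ S, min a s ≤ c) : min a (sSup S) ≤ c := by
  rcases le_or_gt (sSup S) a with hle | hlt
  · refine le_trans (min_le_right _ _) (csSup_le hne fun s hs => ?_)
    have hs' := h s hs
    rwa [min_eq_right (le_trans (le_csSup hbdd hs) hle)] at hs'
  · obtain ⟨s, hs, has⟩ := exists_lt_of_lt_csSup hne hlt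
    have hs' := h s hs
    rw [min_eq_left has.le] at hs'
    exact le_trans (min_le_left _ _) hs'

lemma K_inter_f {f g : ℝ → ℝ} (hf : MapsI f) {x y : ℝ} (hx : x ∈ Set.Icc (0:ℝ) 1)
    (hy : y ∈ Set.Icc (0:ℝ) 1) (hxy : x ≤ y) :
    min (f x) (inter f g y) ≤ inter f g x := by
  unfold inter
  apply min_csSup_le (interSet_nonempty hy) (interSet_bddAbove hf y)
  rintro s ⟨u, hu, v, hv, hm, rfl⟩
  have hvx : x ≤ v := le_trans hxy (by rw [← hm]; exact min_le_right u v)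
  have h1 : min (f x) (min (f u) (g v)) ≤ min (f x) (g v) :=
    min_le_min (le_refl _) (min_le_right _ _)
  exact le_trans h1 (le_inter hf hx hv (min_eq_left hvx))

lemma K_inter_g {f g : ℝ → ℝ} (hf : MapsI f) {x y : ℝ} (hx : x ∈ Set.Icc (0:ℝ) 1)
    (hy : y ∈ Set.Icc (0:ℝ) 1) (hxy : x ≤ y) :
    min (g x) (inter f g y) ≤ inter f g x := by
  unfold inter
  apply min_csSup_le (interSet_nonempty hy) (interSet_bddAbove hf y)
  rintro s ⟨u, hu, v, hv, hm, rfl⟩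
  have hux : x ≤ u := le_trans hxy (by rw [← hm]; exact min_le_left u v)
  have h1 : min (g x) (min (f u) (g v)) ≤ min (f u) (g x) :=
    le_min (le_trans (min_le_right _ _) (min_le_left _ _)) (min_le_left _ _)
  exact le_trans h1 (le_inter hf hu hx (min_eq_right hux))

lemma inter_le_fR_left {f g : ℝ → ℝ} (hf : MapsI f) {x : ℝ} (hx : x ∈ Set.Icc (0:ℝ) 1) :
    inter f g x ≤ fR f x := by
  apply inter_le hx
  intro y hy z hz hm
  refine le_trans (min_le_left _ _) (le_fR hf hx ⟨?_, hy.2⟩)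
  rw [← hm]; exact min_le_left y z

lemma inter_le_fR_right {f g : ℝ → ℝ} (hg : MapsI g) {x : ℝ} (hx : x ∈ Set.Icc (0:ℝ) 1) :
    inter f g x ≤ fR g x := by
  apply inter_le hx
  intro y hy z hz hm
  refine le_trans (min_le_right _ _) (le_fR hg hx ⟨?_, hz.2⟩)
  rw [← hm]; exact min_le_right y z

lemma main_aux (h f : ℝ → ℝ) (hh : MapsI h) (hf : MapsI f)
    (K : ∀ x ∈ Set.Icc (0:ℝ) 1, ∀ y ∈ Set.Icc (0:ℝ) 1, x ≤ y → min (f x) (h y) ≤ h x)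
    (M : ∀ x ∈ Set.Icc (0:ℝ) 1, h x ≤ fR f x) :
    Set.EqOn (inter h f) h (Set.Icc (0:ℝ) 1) := by
  intro x hx
  refine le_antisymm ?_ ?_
  · apply inter_le hx
    intro y hy z hz hm
    rcases le_total y z with hle | hle
    · have hxy : x = y := by rw [← hm, min_eq_left hle]
      rw [hxy]
      exact min_le_left _ _
    · have hxz : x = z := by rw [← hm, min_eq_right hle]
      have hK := K x hx y hy (hxz ▸ hle)
      rw [min_comm] at hK
      rw [← hxz]
      exact hK
  · have hbdd := interSet_bddAbove (f := h) (g := f) hh x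
    have hne := interSet_nonempty (f := h) (g := f) (x := x) hx
    unfold inter
    rw [Real.le_sSup_iff hbdd hne]
    intro ε hε
    have h1 : h x + ε < fR f x := lt_of_lt_of_le (by linarith) (M x hx)
    rw [fR] at h1
    have hne' : (f '' Set.Icc x 1).Nonempty := ⟨f 1, 1, Set.right_mem_Icc.2 hx.2, rfl⟩
    obtain ⟨b, hbmem, hb⟩ := exists_lt_of_lt_csSup hne' h1
    obtain ⟨z, hz, rfl⟩ := hbmem
    refine ⟨min (h x) (f z), ⟨x, hx, z, ⟨le_trans hx.1 hz.1, hz.2⟩, min_eq_left hz.1, rfl⟩, ?_⟩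
    exact lt_min (by linarith) hb

end Aux

/-- `f ⋆ g ⊑ f` and `f ⋆ g ⊑ g` (where `h ⊑ k` means `h ⊓ k = h`
on `[0,1]`); in particular, `f ⋆ g ≠ 1_{{1}}` if neither `f` nor `g` is `1_{{1}}`. -/
theorem stmt_16 (f g : ℝ → ℝ) (hf : MapsI f) (hg : MapsI g)
    (hfn : NormalFn f) (hfc : ConvexFn f) (hgn : NormalFn g) (hgc : ConvexFn g) :
    Set.EqOn (inter (star f g) f) (star f g) (Set.Icc (0:ℝ) 1) ∧
    Set.EqOn (inter (star f g) g) (star f g) (Set.Icc (0:ℝ) 1) ∧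
    (¬ Set.EqOn f ind1 (Set.Icc (0:ℝ) 1) → ¬ Set.EqOn g ind1 (Set.Icc (0:ℝ) 1) →
      ¬ Set.EqOn (star f g) ind1 (Set.Icc (0:ℝ) 1)) := by
  have h1I : (1:ℝ) ∈ Set.Icc (0:ℝ) 1 := Set.right_mem_Icc.2 zero_le_one
  by_cases hP : Set.EqOn f ind1 (Set.Icc (0:ℝ) 1)
  · have hs : star f g = g := if_pos hP
    rw [hs]
    have hf1 : f 1 = 1 := by have := hP h1I; simpa [ind1] using this
    refine ⟨main_aux g f hg hf ?_ ?_, main_aux g g hg hg ?_ ?_, fun hP' _ => absurd hP hP'⟩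
    · intro x hx y hy hxy
      rcases eq_or_lt_of_le hx.2 with h1 | h1
      · have hy1 : y = 1 := le_antisymm hy.2 (h1 ▸ hxy)
        rw [hy1, ← h1]
        exact min_le_right _ _
      · have hfx : f x = 0 := by have := hP hx; simpa [ind1, ne_of_lt h1] using this
        rw [hfx]
        exact le_trans (min_le_left _ _) (hg x hx).1
    · intro x hx
      calc g x ≤ 1 := (hg x hx).2
        _ = f 1 := hf1.symm
        _ ≤ fR f x := le_fR hf hx (Set.right_mem_Icc.2 hx.2)
    · intro x hx y hy hxy; exact min_le_left _ _
    · intro x hx; exact le_fR hg hx ⟨le_refl x, hx.2⟩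
  · by_cases hQ : Set.EqOn g ind1 (Set.Icc (0:ℝ) 1)
    · have hs : star f g = f := (if_neg hP).trans (if_pos hQ)
      rw [hs]
      have hg1 : g 1 = 1 := by have := hQ h1I; simpa [ind1] using this
      refine ⟨main_aux f f hf hf ?_ ?_, main_aux f g hf hg ?_ ?_, fun _ hQ' => absurd hQ hQ'⟩
      · intro x hx y hy hxy; exact min_le_left _ _
      · intro x hx; exact le_fR hf hx ⟨le_refl x, hx.2⟩
      · intro x hx y hy hxy
        rcases eq_or_lt_of_le hx.2 with h1 | h1
        · have hy1 : y = 1 := le_antisymm hy.2 (h1 ▸ hxy)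
          rw [hy1, ← h1]
          exact min_le_right _ _
        · have hgx : g x = 0 := by have := hQ hx; simpa [ind1, ne_of_lt h1] using this
          rw [hgx]
          exact le_trans (min_le_left _ _) (hf x hx).1
      · intro x hx
        calc f x ≤ 1 := (hf x hx).2
          _ = g 1 := hg1.symm
          _ ≤ fR g x := le_fR hg hx (Set.right_mem_Icc.2 hx.2)
    · by_cases hR : min (f 1) (g 1) = 1
      · have hs : star f g = inter f g := (if_neg hP).trans ((if_neg hQ).trans (if_pos hR))
        rw [hs]
        have hMI : MapsI (inter f g) := by
          intro x hx
          refine ⟨inter_nonneg hf hg hx, inter_le hx ?_⟩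
          intro y hy z hz hm
          exact le_trans (min_le_left _ _) (hf y hy).2
        refine ⟨main_aux (inter f g) f hMI hf
            (fun x hx y hy hxy => K_inter_f hf hx hy hxy)
            (fun x hx => inter_le_fR_left hf hx),
          main_aux (inter f g) g hMI hg
            (fun x hx y hy hxy => K_inter_g hf hx hy hxy)
            (fun x hx => inter_le_fR_right hg hx), ?_⟩
        intro _ _ hE
        have hf1 : f 1 = 1 := by
          have h := min_le_left (f 1) (g 1); rw [hR] at h
          exact le_antisymm (hf 1 h1I).2 h
        have hg1 : g 1 = 1 := by
          have h := min_le_right (f 1) (g 1); rw [hR] at h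
          exact le_antisymm (hg 1 h1I).2 h
        simp only [Set.EqOn] at hP hQ
        push_neg at hP hQ
        obtain ⟨x₀, hx₀, hnex⟩ := hP
        obtain ⟨y₀, hy₀, hney⟩ := hQ
        have hx₀1 : x₀ ≠ 1 := by
          intro h; rw [h] at hnex; exact hnex (by simp [ind1, hf1])
        have hy₀1 : y₀ ≠ 1 := by
          intro h; rw [h] at hney; exact hney (by simp [ind1, hg1])
        have hfx₀ : 0 < f x₀ :=
          lt_of_le_of_ne (hf x₀ hx₀).1 (Ne.symm (by simpa [ind1, hx₀1] using hnex))
        have hgy₀ : 0 < g y₀ :=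
          lt_of_le_of_ne (hg y₀ hy₀).1 (Ne.symm (by simpa [ind1, hy₀1] using hney))
        set x := min x₀ y₀ with hxdef
        have hxI : x ∈ Set.Icc (0:ℝ) 1 :=
          ⟨le_min hx₀.1 hy₀.1, le_trans (min_le_left _ _) hx₀.2⟩
        have hx1 : x ≠ 1 := by
          intro h
          exact hx₀1 (le_antisymm hx₀.2 (h ▸ min_le_left x₀ y₀))
        have hE' := hE hxI
        have hlb : min (f x₀) (g y₀) ≤ inter f g x := le_inter hf hx₀ hy₀ rfl
        rw [hE'] at hlb
        simp only [ind1, if_neg hx1] at hlb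
        have := lt_min hfx₀ hgy₀
        linarith
      · have hs : star f g = fun x => if x = 1 then (0:ℝ) else inter f g x :=
          (if_neg hP).trans ((if_neg hQ).trans (if_neg hR))
        rw [hs]
        have hMI : MapsI (fun x => if x = 1 then 0 else inter f g x) := by
          intro x hx
          by_cases hx1 : x = 1
          · simp [hx1]
          · simp only [if_neg hx1]
            refine ⟨inter_nonneg hf hg hx, inter_le hx ?_⟩
            intro y hy z hz hm
            exact le_trans (min_le_left _ _) (hf y hy).2
        have hnn : ∀ x ∈ Set.Icc (0:ℝ) 1, (0:ℝ) ≤ if x = 1 then 0 else inter f g x := by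
          intro x hx
          by_cases hx1 : x = 1
          · simp [hx1]
          · simpa [hx1] using inter_nonneg hf hg hx
        refine ⟨main_aux _ f hMI hf ?_ ?_, main_aux _ g hMI hg ?_ ?_, ?_⟩
        · intro x hx y hy hxy
          by_cases hy1 : y = 1
          · simp only [hy1, if_pos rfl]
            exact le_trans (min_le_right _ _) (hnn x hx)
          · have hx1 : x ≠ 1 := fun h => hy1 (le_antisymm hy.2 (h ▸ hxy))
            simp only [if_neg hy1, if_neg hx1]
            exact K_inter_f hf hx hy hxy
        · intro x hx
          by_cases hx1 : x = 1
          · simp only [hx1, if_pos rfl]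
            exact le_trans (hf 1 h1I).1 (le_fR hf h1I ⟨le_refl 1, le_refl 1⟩)
          · simp only [if_neg hx1]
            exact inter_le_fR_left hf hx
        · intro x hx y hy hxy
          by_cases hy1 : y = 1
          · simp only [hy1, if_pos rfl]
            exact le_trans (min_le_right _ _) (hnn x hx)
          · have hx1 : x ≠ 1 := fun h => hy1 (le_antisymm hy.2 (h ▸ hxy))
            simp only [if_neg hy1, if_neg hx1]
            exact K_inter_g hf hx hy hxy
        · intro x hx
          by_cases hx1 : x = 1
          · simp only [hx1, if_pos rfl]
            exact le_trans (hg 1 h1I).1 (le_fR hg h1I ⟨le_refl 1, le_refl 1⟩)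
          · simp only [if_neg hx1]
            exact inter_le_fR_right hg hx
        · intro _ _ hE
          have := hE h1I
          simp only [ind1, if_pos rfl] at this
          norm_num at this
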